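/- Suppose F satisfies Assumption 2. Then lim_{K→∞} (K·F_K(K,1) − F_X(K,1))/K = m; in particular, there exists K̄ > 0 such that F_X(K,1) < K·F_K(K,1) for all K ≥ K̄, and consequently limsup_{K→∞} [log(F_X(K,1)/(K·F_K(K,1)))/log K] ≤ 0. (First part of the Elasticity Lemma: the elasticity of substitution between capital and land is at least 1 at high capital levels.) -/

import Mathlib

open Filter Topology

/-- **Elasticity Lemma, general part.** Under Assumption 2 (constant returns to scale,
concavity, continuous differentiability with positive marginal products, and
`F(K,1)/K → m`, `F_K(K,1) → m` with `m > 0`), we have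
`(K·F_K(K,1) − F_X(K,1))/K → m`; in particular `F_X(K,1) < K·F_K(K,1)` for all large `K`,
and consequently `limsup_{K→∞} log(F_X(K,1)/(K·F_K(K,1)))/log K ≤ 0`. -/
theorem elasticity_lemma_general
    (F FK FX : ℝ → ℝ → ℝ) (m : ℝ) (hm : 0 < m)
    (hpos : ∀ K X : ℝ, 0 < K → 0 < X → 0 < F K X)
    (hhomog : ∀ c K X : ℝ, 0 < c → 0 < K → 0 < X → F (c * K) (c * X) = c * F K X)
    (hconc : ConcaveOn ℝ (Set.Ioi 0 ×ˢ Set.Ioi 0) (fun p : ℝ × ℝ => F p.1 p.2))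
    (hFK : ∀ K X : ℝ, 0 < K → 0 < X → HasDerivAt (fun k => F k X) (FK K X) K)
    (hFX : ∀ K X : ℝ, 0 < K → 0 < X → HasDerivAt (fun x => F K x) (FX K X) X)
    (hFKpos : ∀ K X : ℝ, 0 < K → 0 < X → 0 < FK K X)
    (hFXpos : ∀ K X : ℝ, 0 < K → 0 < X → 0 < FX K X)
    (hFKcont : ContinuousOn (fun p : ℝ × ℝ => FK p.1 p.2) (Set.Ioi 0 ×ˢ Set.Ioi 0))
    (hFXcont : ContinuousOn (fun p : ℝ × ℝ => FX p.1 p.2) (Set.Ioi 0 ×ˢ Set.Ioi 0))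
    (hlimavg : Tendsto (fun K => F K 1 / K) atTop (𝓝 m))
    (hlimFK : Tendsto (fun K => FK K 1) atTop (𝓝 m)) :
    Tendsto (fun K => (K * FK K 1 - FX K 1) / K) atTop (𝓝 m) ∧
    (∃ Kbar : ℝ, 0 < Kbar ∧ ∀ K ≥ Kbar, FX K 1 < K * FK K 1) ∧
    Filter.limsup (fun K => Real.log (FX K 1 / (K * FK K 1)) / Real.log K) atTop ≤ 0 := by
  -- Euler's relation: for K > 0, FX K 1 = F K 1 - K * FK K 1
  have euler : ∀ K : ℝ, 0 < K → FX K 1 = F K 1 - K * FK K 1 := by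
    intro K hK
    -- derivative of x ↦ x * F (K / x) 1 at x = 1
    have hinner : HasDerivAt (fun x : ℝ => F (K / x) 1) (FK K 1 * (-K)) 1 := by
      have hdiv : HasDerivAt (fun x : ℝ => K / x) (-K) 1 := by
        have := (hasDerivAt_inv (one_ne_zero)).const_mul K
        simp only [div_eq_mul_inv]
        exact this.congr_deriv (by norm_num)
      have hf : HasDerivAt (fun k : ℝ => F k 1) (FK K 1) (K / 1) := by
        simpa using hFK K 1 hK one_pos
      exact hf.comp 1 hdiv
    have hprod : HasDerivAt (fun x : ℝ => x * F (K / x) 1)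
        (1 * F (K / 1) 1 + 1 * (FK K 1 * (-K))) 1 :=
      (hasDerivAt_id 1).mul hinner
    have heq : (fun x : ℝ => F K x) =ᶠ[𝓝 (1 : ℝ)] (fun x : ℝ => x * F (K / x) 1) := by
      filter_upwards [eventually_gt_nhds (show (0:ℝ) < 1 by norm_num)] with x hx
      have h := hhomog x (K / x) 1 hx (div_pos hK hx) one_pos
      rw [mul_div_cancel₀ K (ne_of_gt hx), mul_one] at h
      exact h
    have hder : HasDerivAt (fun x : ℝ => F K x) (F K 1 - K * FK K 1) 1 := by
      have := hprod.congr_of_eventuallyEq heq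
      exact this.congr_deriv (by rw [div_one]; ring)
    exact (hFX K 1 hK one_pos).unique hder
  -- The main limit
  have hlim2 : Tendsto (fun K : ℝ => 2 * FK K 1 - F K 1 / K) atTop (𝓝 m) := by
    have : Tendsto (fun K : ℝ => 2 * FK K 1 - F K 1 / K) atTop (𝓝 (2 * m - m)) :=
      (hlimFK.const_mul 2).sub hlimavg
    simpa [two_mul] using this
  have hmain : Tendsto (fun K => (K * FK K 1 - FX K 1) / K) atTop (𝓝 m) := by
    apply hlim2.congr'
    filter_upwards [eventually_gt_atTop (0 : ℝ)] with K hK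
    rw [euler K hK]
    field_simp
    ring
  -- eventually F X < K * FK
  have hev : ∀ᶠ K in atTop, FX K 1 < K * FK K 1 := by
    have h1 : ∀ᶠ K in atTop, 0 < 2 * FK K 1 - F K 1 / K :=
      hlim2.eventually (eventually_gt_nhds hm)
    filter_upwards [h1, eventually_gt_atTop (0 : ℝ)] with K hK1 hK0
    rw [euler K hK0]
    have : F K 1 / K < 2 * FK K 1 := by linarith
    have h2 : F K 1 < 2 * FK K 1 * K := (div_lt_iff₀ hK0).mp this
    nlinarith
  refine ⟨hmain, ?_, ?_⟩
  · obtain ⟨K₀, hK₀⟩ := eventually_atTop.mp hev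
    refine ⟨max K₀ 1, lt_of_lt_of_le one_pos (le_max_right _ _), fun K hK => ?_⟩
    exact hK₀ K (le_trans (le_max_left _ _) hK)
  · -- limsup part
    have hev0 : ∀ᶠ K in atTop, Real.log (FX K 1 / (K * FK K 1)) / Real.log K ≤ 0 := by
      filter_upwards [hev, eventually_gt_atTop (1 : ℝ)] with K hlt hK1
      have hK0 : (0:ℝ) < K := lt_trans one_pos hK1
      have hFKp := hFKpos K 1 hK0 one_pos
      have hFXp := hFXpos K 1 hK0 one_pos
      have hratio : FX K 1 / (K * FK K 1) < 1 :=
        (div_lt_one (by positivity)).mpr hlt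
      have hlogneg : Real.log (FX K 1 / (K * FK K 1)) ≤ 0 :=
        le_of_lt (Real.log_neg (by positivity) hratio)
      exact div_nonpos_of_nonpos_of_nonneg hlogneg (Real.log_pos hK1).le
    rw [Filter.limsup_eq]
    by_cases hbdd : BddBelow {a : ℝ | ∀ᶠ K in atTop,
        Real.log (FX K 1 / (K * FK K 1)) / Real.log K ≤ a}
    · exact csInf_le hbdd hev0
    · rw [Real.sInf_of_not_bddBelow hbdd]
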